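/- Let ℓ ≥ 1, p > 1, and let (β_{ij}) be a symmetric ℓ×ℓ real matrix with β_{ii} > 0 and β_{ij} ≥ 0 for all i ≠ j. Then there exists c = (c_1, …, c_ℓ) ∈ ℝ^ℓ with all c_i ≠ 0 solving the algebraic system c_i = Σ_{j=1}^ℓ β_{ij} |c_j|^p |c_i|^{p−2} c_i for all i, provided 1 < p < 2; moreover c can be chosen with all c_i > 0. -/

import Mathlib

open Finset

noncomputable def QF {ι : Type} [Fintype ι] (β : ι → ι → ℝ) (p : ℝ) (x : ι → ℝ) : ℝ :=
  ∑ i, ∑ j, β i j * x i ^ p * x j ^ p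

lemma Qsplit {ι : Type} [Fintype ι] [DecidableEq ι] (β : ι → ι → ℝ)
    (hsym : ∀ i j, β i j = β j i) (p : ℝ) (x : ι → ℝ) (i : ι) :
    QF β p x = β i i * x i ^ p * x i ^ p
      + 2 * (x i ^ p * ∑ j ∈ univ.erase i, β i j * x j ^ p)
      + ∑ j ∈ univ.erase i, ∑ k ∈ univ.erase i, β j k * x j ^ p * x k ^ p := by
  unfold QF
  have e1 : ∀ (g : ι → ℝ), ∑ j, g j = (∑ j ∈ univ.erase i, g j) + g i :=
    fun g => (Finset.sum_erase_add univ g (mem_univ i)).symm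
  rw [e1 (fun j => ∑ k, β j k * x j ^ p * x k ^ p)]
  rw [e1 (fun k => β i k * x i ^ p * x k ^ p)]
  have e2 : ∀ j ∈ univ.erase i, (∑ k, β j k * x j ^ p * x k ^ p)
      = (∑ k ∈ univ.erase i, β j k * x j ^ p * x k ^ p) + β j i * x j ^ p * x i ^ p :=
    fun j _ => e1 (fun k => β j k * x j ^ p * x k ^ p)
  rw [Finset.sum_congr rfl e2, Finset.sum_add_distrib]
  have e3 : (∑ j ∈ univ.erase i, β j i * x j ^ p * x i ^ p)
      = x i ^ p * ∑ j ∈ univ.erase i, β i j * x j ^ p := by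
    rw [Finset.mul_sum]; apply Finset.sum_congr rfl; intro j _; rw [hsym j i]; ring
  have e4 : (∑ k ∈ univ.erase i, β i k * x i ^ p * x k ^ p)
      = x i ^ p * ∑ j ∈ univ.erase i, β i j * x j ^ p := by
    rw [Finset.mul_sum]; apply Finset.sum_congr rfl; intro j _; ring
  rw [e3, e4]; ring

lemma rayleigh {ι : Type} [Fintype ι] (β : ι → ι → ℝ) (p : ℝ) (hp : 0 < p) (M : ℝ)
    (hmax : ∀ y : ι → ℝ, (∀ i, 0 ≤ y i) → ∑ i, y i ^ 2 = 1 → QF β p y ≤ M)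
    (x : ι → ℝ) (hx : ∀ i, 0 ≤ x i) : QF β p x ≤ M * (∑ i, x i ^ 2) ^ p := by
  have hN0 : 0 ≤ ∑ i, x i ^ 2 := Finset.sum_nonneg fun i _ => sq_nonneg _
  rcases hN0.eq_or_lt with h | h
  · have hx0 : ∀ i, x i = 0 := by
      intro i
      have h2 := (Finset.sum_eq_zero_iff_of_nonneg (fun i _ => sq_nonneg (x i))).1 h.symm i (mem_univ i)
      exact pow_eq_zero_iff two_ne_zero |>.1 h2
    have hQ0 : QF β p x = 0 := by
      unfold QF; apply Finset.sum_eq_zero; intro i _; apply Finset.sum_eq_zero; intro j _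
      rw [hx0 i, Real.zero_rpow hp.ne']; ring
    rw [hQ0, ← h, Real.zero_rpow hp.ne', mul_zero]
  · set N := ∑ i, x i ^ 2 with hN
    set t := Real.sqrt N with ht
    have ht0 : 0 < t := Real.sqrt_pos.2 h
    set y := fun i => x i / t with hy
    have hy0 : ∀ i, 0 ≤ y i := fun i => div_nonneg (hx i) ht0.le
    have ht2 : t ^ 2 = N := Real.sq_sqrt h.le
    have hy2 : ∑ i, y i ^ 2 = 1 := by
      simp only [hy, div_pow]
      rw [← Finset.sum_div, ht2]
      exact div_self h.ne'
    have hxy : ∀ i, x i ^ p = t ^ p * y i ^ p := by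
      intro i
      have hxi : x i = t * y i := by simp only [hy]; field_simp
      rw [hxi, Real.mul_rpow ht0.le (hy0 i)]
    have hQ : QF β p x = (t ^ p * t ^ p) * QF β p y := by
      unfold QF; rw [Finset.mul_sum]; apply Finset.sum_congr rfl; intro i _
      rw [Finset.mul_sum]; apply Finset.sum_congr rfl; intro j _
      rw [hxy i, hxy j]; ring
    have hNp : N ^ p = t ^ p * t ^ p := by
      rw [← ht2, sq, Real.mul_rpow ht0.le ht0.le]
    have h2 : (0:ℝ) ≤ t ^ p * t ^ p := by positivity
    rw [hQ, hNp]
    calc (t ^ p * t ^ p) * QF β p y ≤ (t ^ p * t ^ p) * M :=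
          mul_le_mul_of_nonneg_left (hmax y hy0 hy2) h2
    _ = M * (t ^ p * t ^ p) := mul_comm _ _

lemma keyderiv (p : ℝ) (hp1 : 1 < p) (hp2 : p < 2) (b A C D Q s : ℝ)
    (hs : 0 < s) (hsD : s ^ 2 + D = 1)
    (hQ : b * s ^ p * s ^ p + 2 * (s ^ p * A) + C = Q)
    (hmax : ∀ t : ℝ, 0 < t →
      b * t ^ p * t ^ p + 2 * (t ^ p * A) + C ≤ Q * (t ^ 2 + D) ^ p) :
    b * s ^ p + A = Q * s ^ (2 - p) := by
  set φ := fun t : ℝ => b * t ^ p * t ^ p + 2 * (t ^ p * A) + C - Q * (t ^ 2 + D) ^ p with hφ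
  have hφs : φ s = 0 := by
    simp only [hφ]; rw [hsD, Real.one_rpow]; linarith
  have hmem : Set.Ioi (0:ℝ) ∈ nhds s := isOpen_Ioi.mem_nhds hs
  have hloc : IsLocalMax φ s := by
    filter_upwards [hmem] with t ht
    rw [hφs]
    have := hmax t ht
    simp only [hφ]; linarith
  have h1 : HasDerivAt (fun t : ℝ => t ^ p) (p * s ^ (p - 1)) s :=
    Real.hasDerivAt_rpow_const (Or.inl hs.ne')
  have h2 : HasDerivAt (fun t : ℝ => t ^ 2 + D) (2 * s) s := by
    simpa using (hasDerivAt_pow 2 s).add_const D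
  have h3 : HasDerivAt (fun t : ℝ => (t ^ 2 + D) ^ p)
      (2 * s * p * (s ^ 2 + D) ^ (p - 1)) s :=
    h2.rpow_const (Or.inl (by rw [hsD]; exact one_ne_zero))
  have hnum : HasDerivAt (fun t => b * t ^ p * t ^ p + 2 * (t ^ p * A) + C)
      ((b * (p * s ^ (p-1)) * s ^ p + b * s ^ p * (p * s ^ (p-1))) + 2 * (p * s ^ (p-1) * A)) s :=
    (((h1.const_mul b).mul h1).add ((h1.mul_const A).const_mul 2)).add_const C
  have hd : HasDerivAt φ
      (((b * (p * s ^ (p-1)) * s ^ p + b * s ^ p * (p * s ^ (p-1))) + 2 * (p * s ^ (p-1) * A))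
        - Q * (2 * s * p * (s ^ 2 + D) ^ (p - 1))) s := hnum.sub (h3.const_mul Q)
  have hzero := hloc.hasDerivAt_eq_zero hd
  rw [hsD, Real.one_rpow] at hzero
  have h2p : (2:ℝ) * p ≠ 0 := by positivity
  have e1 : b * s ^ (p-1) * s ^ p + A * s ^ (p-1) = Q * s := by
    apply mul_left_cancel₀ h2p
    linear_combination hzero
  have f1 : s ^ (p-1) * s ^ (1-p) = 1 := by
    rw [← Real.rpow_add hs, show p - 1 + (1 - p) = 0 by ring, Real.rpow_zero]
  have f2 : s * s ^ (1-p) = s ^ (2-p) := by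
    nth_rewrite 1 [← Real.rpow_one s]
    rw [← Real.rpow_add hs, show (1:ℝ) + (1 - p) = 2 - p by ring]
  have e2 : (b * s ^ (p-1) * s ^ p + A * s ^ (p-1)) * s ^ (1-p) = b * s ^ p + A := by
    have expand : (b * s ^ (p-1) * s ^ p + A * s ^ (p-1)) * s ^ (1-p)
        = b * s ^ p * (s ^ (p-1) * s ^ (1-p)) + A * (s ^ (p-1) * s ^ (1-p)) := by ring
    rw [expand, f1]; ring
  have e3 : Q * s * s ^ (1-p) = Q * s ^ (2-p) := by rw [mul_assoc, f2]
  rw [← e2, e1, e3]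

lemma pert (p A Q : ℝ) (hp1 : 1 < p) (hp2 : p < 2) (hA : 0 < A) (hQ : 0 < Q) :
    ∃ ε : ℝ, 0 < ε ∧ ε < 1 ∧
      Q < 2 * (ε ^ p * (Real.sqrt (1 - ε ^ 2) ^ p * A))
          + Real.sqrt (1 - ε ^ 2) ^ p * Real.sqrt (1 - ε ^ 2) ^ p * Q := by
  have h2p : 0 < 2 - p := by linarith
  have hp0 : 0 < p := by linarith
  set m := min (1/4 : ℝ) (A / (2 * p * Q)) with hm
  have hm0 : 0 < m := lt_min (by norm_num) (by positivity)
  have hm14 : m ≤ 1/4 := min_le_left _ _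
  have hm1 : m ≤ 1 := by linarith
  set ε := m ^ (1 / (2 - p)) with hε
  have hε0 : 0 < ε := Real.rpow_pos_of_pos hm0 _
  have hexp1 : 1 ≤ 1 / (2 - p) := by rw [le_div_iff₀ h2p]; linarith
  have hε14 : ε ≤ 1/4 := by
    calc ε ≤ m ^ (1:ℝ) := Real.rpow_le_rpow_of_exponent_ge hm0 hm1 hexp1
    _ = m := Real.rpow_one m
    _ ≤ 1/4 := hm14
  have hε1 : ε < 1 := by linarith
  have hεkey : ε ^ (2 - p) = m := by
    rw [hε, ← Real.rpow_mul hm0.le, one_div, inv_mul_cancel₀ h2p.ne', Real.rpow_one]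
  have hsm : p * Q * ε ^ (2 - p) < A := by
    rw [hεkey]
    have hmr : m ≤ A / (2 * p * Q) := min_le_right _ _
    have hpq : 0 < p * Q := by positivity
    calc p * Q * m ≤ p * Q * (A / (2*p*Q)) := mul_le_mul_of_nonneg_left hmr hpq.le
    _ = A / 2 := by field_simp
    _ < A := by linarith
  set u := Real.sqrt (1 - ε ^ 2) with hu
  have hε2 : ε ^ 2 ≤ 1 / 16 := by nlinarith
  have h1e : (0:ℝ) < 1 - ε ^ 2 := by nlinarith
  have hu2 : u ^ 2 = 1 - ε ^ 2 := Real.sq_sqrt h1e.le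
  have hu0 : 0 < u := Real.sqrt_pos.2 h1e
  have hu1 : u ≤ 1 := by nlinarith
  have hrpow2 : u ^ (2:ℝ) = u ^ 2 := by
    rw [show (2:ℝ) = ((2:ℕ):ℝ) by norm_num, Real.rpow_natCast]
  have hup : 1 - ε ^ 2 ≤ u ^ p := by
    calc 1 - ε ^ 2 = u ^ (2:ℝ) := by rw [hrpow2, hu2]
    _ ≤ u ^ p := Real.rpow_le_rpow_of_exponent_ge hu0 hu1 (by linarith)
  have hBern : 1 - p * ε ^ 2 ≤ u ^ p * u ^ p := by
    have hup2 : u ^ p * u ^ p = (1 - ε ^ 2) ^ p := by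
      rw [← Real.mul_rpow hu0.le hu0.le, ← sq, hu2]
    rw [hup2]
    have hb := one_add_mul_self_le_rpow_one_add (s := -ε^2) (by nlinarith) hp1.le
    calc 1 - p * ε^2 = 1 + p * (-ε^2) := by ring
    _ ≤ (1 + -ε^2) ^ p := hb
    _ = (1 - ε^2) ^ p := by ring_nf
  have hεp : 0 < ε ^ p := Real.rpow_pos_of_pos hε0 _
  have hmul : ε ^ p * ε ^ (2 - p) = ε ^ 2 := by
    rw [← Real.rpow_add hε0, show p + (2 - p) = (2:ℝ) by ring,
      show (2:ℝ) = ((2:ℕ):ℝ) by norm_num, Real.rpow_natCast]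
  have hfin : p * Q * ε ^ 2 < A * ε ^ p := by
    have h := mul_lt_mul_of_pos_right hsm hεp
    calc p * Q * ε ^ 2 = p * Q * ε ^ (2-p) * ε ^ p := by rw [← hmul]; ring
    _ < A * ε ^ p := h
  refine ⟨ε, hε0, hε1, ?_⟩
  have key1 : (1 - ε^2) * (ε^p * A) ≤ u ^ p * (ε^p * A) :=
    mul_le_mul_of_nonneg_right hup (by positivity)
  have key2 : (1 - p * ε^2) * Q ≤ u ^ p * u ^ p * Q :=
    mul_le_mul_of_nonneg_right hBern hQ.le
  nlinarith [mul_pos hεp hA, hε2, mul_nonneg (mul_pos hεp hA).le (sq_nonneg ε)]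

lemma auxmain (p : ℝ) (hp1 : 1 < p) (hp2 : p < 2) :
    ∀ n : ℕ, ∀ (ι : Type) (_ : Fintype ι) (_ : DecidableEq ι), Fintype.card ι ≤ n →
      ∀ β : ι → ι → ℝ, (∀ i j, β i j = β j i) → (∀ i, 0 < β i i) →
        (∀ i j, i ≠ j → 0 ≤ β i j) →
        ∃ c : ι → ℝ, (∀ i, 0 < c i) ∧ ∀ i, c i ^ (2 - p) = ∑ j, β i j * c j ^ p := by
  have hp0 : (0:ℝ) < p := by linarith
  intro n
  induction n with
  | zero =>
    intro ι _ _ hcard β _ _ _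
    have hE : IsEmpty ι := Fintype.card_eq_zero_iff.1 (Nat.le_zero.1 hcard)
    exact ⟨fun _ => 1, fun i => (hE.false i).elim, fun i => (hE.false i).elim⟩
  | succ n ih =>
    intro ι instF instD hcard β hsym hdiag hoff
    classical
    rcases isEmpty_or_nonempty ι with hE | hNE
    · exact ⟨fun _ => 1, fun i => (hE.false i).elim, fun i => (hE.false i).elim⟩
    -- continuity facts
    have hrp : Continuous fun t : ℝ => t ^ p := by
      rw [continuous_iff_continuousAt]; intro x
      rcases eq_or_ne x 0 with h | h
      · exact Real.continuousAt_rpow_const x p (Or.inr hp0.le)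
      · exact Real.continuousAt_rpow_const x p (Or.inl h)
    have hQcont : Continuous (QF β p) := by
      unfold QF
      exact continuous_finset_sum _ fun i _ => continuous_finset_sum _ fun j _ =>
        (continuous_const.mul (hrp.comp (continuous_apply i))).mul (hrp.comp (continuous_apply j))
    have hNcont : Continuous fun x : ι → ℝ => ∑ i, x i ^ 2 :=
      continuous_finset_sum _ fun i _ => (continuous_apply i).pow 2
    set K : Set (ι → ℝ) := {x | (∀ i, 0 ≤ x i) ∧ ∑ i, x i ^ 2 = 1} with hK
    have hKsub : K ⊆ Set.Icc 0 1 := by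
      rintro x ⟨hx0, hx1⟩
      refine ⟨fun i => hx0 i, fun i => ?_⟩
      have h1 : x i ^ 2 ≤ 1 := by
        rw [← hx1]
        exact Finset.single_le_sum (fun j _ => sq_nonneg (x j)) (mem_univ i)
      have h2 : x i ≤ 1 := by nlinarith [hx0 i]
      simpa using h2
    have hKclosed : IsClosed K := by
      have h1 : IsClosed {x : ι → ℝ | ∀ i, 0 ≤ x i} := by
        have he : {x : ι → ℝ | ∀ i, 0 ≤ x i} = ⋂ i, {x | 0 ≤ x i} := by ext x; simp
        rw [he]
        exact isClosed_iInter fun i => isClosed_le continuous_const (continuous_apply i)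
      have h2 : IsClosed {x : ι → ℝ | ∑ i, x i ^ 2 = 1} := isClosed_eq hNcont continuous_const
      exact h1.inter h2
    have hKcompact : IsCompact K := isCompact_Icc.of_isClosed_subset hKclosed hKsub
    obtain ⟨i0⟩ := hNE
    set e : ι → ℝ := fun j => if j = i0 then 1 else 0 with he
    have heK : e ∈ K := by
      constructor
      · intro i; by_cases h : i = i0 <;> simp [he, h]
      · have h1 : ∀ j, e j ^ 2 = if j = i0 then 1 else 0 := by
          intro j; by_cases h : j = i0 <;> simp [he, h]
        rw [Finset.sum_congr rfl fun j _ => h1 j]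
        simp
    obtain ⟨d, hdK, hdmax⟩ := hKcompact.exists_isMaxOn ⟨e, heK⟩ hQcont.continuousOn
    obtain ⟨hd0, hd1⟩ := hdK
    have hep : ∀ j, e j ^ p = if j = i0 then 1 else 0 := by
      intro j; by_cases h : j = i0 <;> simp [he, h, Real.zero_rpow hp0.ne', Real.one_rpow]
    have hQe : QF β p e = β i0 i0 := by
      unfold QF
      have h1 : ∀ i j, β i j * e i ^ p * e j ^ p = if i = i0 ∧ j = i0 then β i0 i0 else 0 := by
        intro i j
        by_cases h1 : i = i0 <;> by_cases h2 : j = i0 <;>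
          simp [hep, h1, h2]
      rw [Finset.sum_congr rfl fun i _ => Finset.sum_congr rfl fun j _ => h1 i j]
      have h2 : ∀ i, (∑ j, if i = i0 ∧ j = i0 then β i0 i0 else 0) = if i = i0 then β i0 i0 else 0 := by
        intro i; by_cases h : i = i0 <;> simp [h]
      rw [Finset.sum_congr rfl fun i _ => h2 i]
      simp
    have hQd : 0 < QF β p d := by
      have h := hdmax heK
      simp only [Set.mem_setOf_eq] at h
      rw [hQe] at h
      exact lt_of_lt_of_le (hdiag i0) h
    have hray : ∀ x : ι → ℝ, (∀ i, 0 ≤ x i) → QF β p x ≤ QF β p d * (∑ i, x i ^ 2) ^ p :=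
      rayleigh β p hp0 _ (fun y hy0 hy1 => hdmax (⟨hy0, hy1⟩ : y ∈ K)) 
    -- dichotomy
    have hdich : ∀ i, d i = 0 → ∑ j ∈ univ.erase i, β i j * d j ^ p = 0 := by
      intro i hdi
      by_contra hne
      have hAnn : 0 ≤ ∑ j ∈ univ.erase i, β i j * d j ^ p :=
        Finset.sum_nonneg fun j hj =>
          mul_nonneg (hoff i j (Ne.symm (mem_erase.1 hj).1)) (Real.rpow_nonneg (hd0 j) p)
      have hApos : 0 < ∑ j ∈ univ.erase i, β i j * d j ^ p := hAnn.lt_of_ne (Ne.symm hne)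
      set A := ∑ j ∈ univ.erase i, β i j * d j ^ p with hA
      obtain ⟨ε, hε0, hε1, hkey⟩ := pert p A (QF β p d) hp1 hp2 hApos hQd
      set u := Real.sqrt (1 - ε ^ 2) with hu
      have h1e : (0:ℝ) ≤ 1 - ε ^ 2 := by nlinarith
      have hu2 : u ^ 2 = 1 - ε ^ 2 := Real.sq_sqrt h1e
      have hu0 : 0 ≤ u := Real.sqrt_nonneg _
      set dε : ι → ℝ := fun j => if j = i then ε else u * d j with hdε
      have hdε0 : ∀ j, 0 ≤ dε j := by
        intro j
        by_cases h : j = i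
        · simp [hdε, h]; linarith
        · simp [hdε, h]; exact mul_nonneg hu0 (hd0 j)
      have hdiag_erase : ∑ j ∈ univ.erase i, d j ^ 2 = 1 := by
        have h : (∑ j ∈ univ.erase i, d j ^ 2) + d i ^ 2 = ∑ j, d j ^ 2 :=
          Finset.sum_erase_add univ _ (mem_univ i)
        rw [hd1, hdi] at h
        simpa using h
      have hdεnorm : ∑ j, dε j ^ 2 = 1 := by
        rw [← Finset.sum_erase_add _ _ (mem_univ i)]
        have e1 : ∀ j ∈ univ.erase i, dε j ^ 2 = (1 - ε ^ 2) * d j ^ 2 := by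
          intro j hj
          rw [hdε]
          simp only [(mem_erase.1 hj).1, if_false]
          rw [mul_pow, hu2]
        rw [Finset.sum_congr rfl e1, ← Finset.mul_sum, hdiag_erase]
        simp [hdε]
      have hdεK : dε ∈ K := ⟨hdε0, hdεnorm⟩
      have hdεi : dε i ^ p = ε ^ p := by simp [hdε]
      have hcrossA : ∑ j ∈ univ.erase i, β i j * dε j ^ p = u ^ p * A := by
        rw [hA, Finset.mul_sum]
        apply Finset.sum_congr rfl
        intro j hj
        have hj' : dε j = u * d j := by simp [hdε, (mem_erase.1 hj).1]
        rw [hj', Real.mul_rpow hu0 (hd0 j)]; ring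
      have hQdsplit := Qsplit β hsym p d i
      have hdip : d i ^ p = 0 := by rw [hdi, Real.zero_rpow hp0.ne']
      rw [hdip] at hQdsplit
      simp only [mul_zero, zero_mul, zero_add, add_zero] at hQdsplit
      have hCC : ∑ j ∈ univ.erase i, ∑ k ∈ univ.erase i, β j k * dε j ^ p * dε k ^ p
          = (u ^ p * u ^ p) * QF β p d := by
        rw [hQdsplit, Finset.mul_sum]
        apply Finset.sum_congr rfl
        intro j hj
        rw [Finset.mul_sum]
        apply Finset.sum_congr rfl
        intro k hk
        have hj' : dε j = u * d j := by simp [hdε, (mem_erase.1 hj).1]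
        have hk' : dε k = u * d k := by simp [hdε, (mem_erase.1 hk).1]
        rw [hj', hk', Real.mul_rpow hu0 (hd0 j), Real.mul_rpow hu0 (hd0 k)]
        ring
      have hQdε : QF β p dε
          = β i i * (ε ^ p * ε ^ p) + 2 * (ε ^ p * (u ^ p * A)) + (u ^ p * u ^ p) * QF β p d := by
        rw [Qsplit β hsym p dε i, hdεi, hcrossA, hCC]; ring
      have hle := hdmax hdεK
      simp only [Set.mem_setOf_eq] at hle
      have hβnn : 0 ≤ β i i * (ε ^ p * ε ^ p) :=
        mul_nonneg (hdiag i).le (mul_nonneg (Real.rpow_nonneg hε0.le p) (Real.rpow_nonneg hε0.le p))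
      rw [hQdε] at hle
      linarith
    have hone : ∃ i, 0 < d i := by
      by_contra h
      push_neg at h
      have hz : ∀ i, d i = 0 := fun i => le_antisymm (h i) (hd0 i)
      rw [Finset.sum_congr rfl fun i _ => by rw [hz i]] at hd1
      simp at hd1
    by_cases hall : ∀ i, 0 < d i
    · -- full support case
      have heq : ∀ i, ∑ j, β i j * d j ^ p = QF β p d * d i ^ (2 - p) := by
        intro i
        set s := d i with hs
        set D := ∑ j ∈ univ.erase i, d j ^ 2 with hD
        set A := ∑ j ∈ univ.erase i, β i j * d j ^ p with hA
        set C := ∑ j ∈ univ.erase i, ∑ k ∈ univ.erase i, β j k * d j ^ p * d k ^ p with hC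
        have hsD : s ^ 2 + D = 1 := by
          have h : (∑ j ∈ univ.erase i, d j ^ 2) + d i ^ 2 = ∑ j, d j ^ 2 :=
            Finset.sum_erase_add univ _ (mem_univ i)
          rw [hd1] at h
          rw [← h, ← hD]; ring
        have hQs : β i i * s ^ p * s ^ p + 2 * (s ^ p * A) + C = QF β p d :=
          (Qsplit β hsym p d i).symm
        have hmax' : ∀ t : ℝ, 0 < t →
            β i i * t ^ p * t ^ p + 2 * (t ^ p * A) + C ≤ QF β p d * (t ^ 2 + D) ^ p := by
          intro t ht
          set x := Function.update d i t with hx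
          have hx0 : ∀ j, 0 ≤ x j := by
            intro j
            by_cases h : j = i
            · rw [hx, h, Function.update_self]; exact ht.le
            · rw [hx, Function.update_of_ne h]; exact hd0 j
          have hxe : ∀ j ∈ univ.erase i, x j = d j := fun j hj =>
            Function.update_of_ne (mem_erase.1 hj).1 _ _
          have hxi : x i = t := Function.update_self i t d
          have hxN : ∑ j, x j ^ 2 = t ^ 2 + D := by
            rw [← Finset.sum_erase_add _ _ (mem_univ i), hxi,
              Finset.sum_congr rfl fun j hj => by rw [hxe j hj]]
            ring
          have hsum1 : ∑ j ∈ univ.erase i, β i j * x j ^ p = A := by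
            rw [hA]
            apply Finset.sum_congr rfl
            intro j hj; rw [hxe j hj]
          have hsum2 : ∑ j ∈ univ.erase i, ∑ k ∈ univ.erase i, β j k * x j ^ p * x k ^ p = C := by
            rw [hC]
            apply Finset.sum_congr rfl
            intro j hj
            apply Finset.sum_congr rfl
            intro k hk
            rw [hxe j hj, hxe k hk]
          have hQx : QF β p x = β i i * t ^ p * t ^ p + 2 * (t ^ p * A) + C := by
            rw [Qsplit β hsym p x i, hxi, hsum1, hsum2]
          have h := hray x hx0
          rw [hQx, hxN] at h
          exact h
        have hkd := keyderiv p hp1 hp2 (β i i) A C D (QF β p d) s (hall i) hsD hQs hmax'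
        have h : (∑ j ∈ univ.erase i, β i j * d j ^ p) + β i i * d i ^ p
            = ∑ j, β i j * d j ^ p := Finset.sum_erase_add univ _ (mem_univ i)
        rw [← h, ← hA, ← hkd]
        ring
      set lam := (QF β p d) ^ (1 / (2 - 2*p)) with hlam
      have hlam0 : 0 < lam := Real.rpow_pos_of_pos hQd _
      refine ⟨fun i => lam * d i, fun i => mul_pos hlam0 (hall i), fun i => ?_⟩
      rw [Real.mul_rpow hlam0.le (hall i).le]
      have hterm : ∀ j, β i j * (lam * d j) ^ p = lam ^ p * (β i j * d j ^ p) := by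
        intro j; rw [Real.mul_rpow hlam0.le (hall j).le]; ring
      rw [Finset.sum_congr rfl fun j _ => hterm j, ← Finset.mul_sum, heq i]
      have h2p2 : (2 : ℝ) - 2*p ≠ 0 := by intro h; nlinarith
      have hQlam : lam ^ (2-p) = lam ^ p * QF β p d := by
        rw [hlam, ← Real.rpow_mul hQd.le, ← Real.rpow_mul hQd.le]
        nth_rewrite 3 [← Real.rpow_one (QF β p d)]
        rw [← Real.rpow_add hQd]
        congr 1
        linear_combination mul_inv_cancel₀ h2p2
      rw [hQlam]; ring
    · -- split case
      push_neg at hall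
      obtain ⟨i2, hi2⟩ := hall
      obtain ⟨i1, hi1⟩ := hone
      have hcross : ∀ i j, 0 < d i → d j = 0 → β i j = 0 := by
        intro i j hdi hdj
        have hij : i ≠ j := by intro h; rw [h, hdj] at hdi; exact lt_irrefl 0 hdi
        have hsum := hdich j hdj
        have hnn : ∀ k ∈ univ.erase j, 0 ≤ β j k * d k ^ p := fun k hk =>
          mul_nonneg (hoff j k (Ne.symm (mem_erase.1 hk).1)) (Real.rpow_nonneg (hd0 k) p)
        have hterm : β j i * d i ^ p = 0 :=
          (Finset.sum_eq_zero_iff_of_nonneg hnn).1 hsum i (mem_erase.2 ⟨hij, mem_univ i⟩)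
        have hdip : 0 < d i ^ p := Real.rpow_pos_of_pos hdi p
        rw [hsym i j]
        exact (mul_eq_zero.1 hterm).resolve_right hdip.ne'
      set P : ι → Prop := fun i => 0 < d i with hP
      have hcardS : Fintype.card {i // P i} ≤ n := by
        have h : Fintype.card {i // P i} < Fintype.card ι :=
          Fintype.card_subtype_lt (x := i2) (not_lt.2 hi2)
        omega
      have hcardZ : Fintype.card {i // ¬ P i} ≤ n := by
        have h : Fintype.card {i // ¬ P i} < Fintype.card ι :=
          Fintype.card_subtype_lt (x := i1) (not_not.2 hi1)
        omega
      obtain ⟨cS, hcS0, hcSeq⟩ := ih {i // P i} inferInstance inferInstance hcardS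
        (fun a b => β a.1 b.1) (fun a b => hsym a.1 b.1) (fun a => hdiag a.1)
        (fun a b hab => hoff a.1 b.1 (fun h => hab (Subtype.ext h)))
      obtain ⟨cZ, hcZ0, hcZeq⟩ := ih {i // ¬ P i} inferInstance inferInstance hcardZ
        (fun a b => β a.1 b.1) (fun a b => hsym a.1 b.1) (fun a => hdiag a.1)
        (fun a b hab => hoff a.1 b.1 (fun h => hab (Subtype.ext h)))
      set c : ι → ℝ := fun i => if h : P i then cS ⟨i, h⟩ else cZ ⟨i, h⟩ with hc
      have hc0 : ∀ i, 0 < c i := by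
        intro i
        by_cases h : P i
        · rw [hc]; simp only [h, dif_pos]; exact hcS0 _
        · rw [hc]; simp only [h, dif_neg, not_false_iff]; exact hcZ0 _
      refine ⟨c, hc0, fun i => ?_⟩
      have hsplitsum : ∀ f : ι → ℝ, ∑ j, f j
          = (∑ j ∈ univ.filter P, f j) + ∑ j ∈ univ.filter (fun j => ¬ P j), f j :=
        fun f => (Finset.sum_filter_add_sum_filter_not univ P f).symm
      by_cases h : P i
      · have hci : c i = cS ⟨i, h⟩ := by rw [hc]; simp only [h, dif_pos]
        rw [hci, hsplitsum]
        have hz : ∑ j ∈ univ.filter (fun j => ¬ P j), β i j * c j ^ p = 0 := by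
          apply Finset.sum_eq_zero
          intro j hj
          have hj' : ¬ P j := (Finset.mem_filter.1 hj).2
          have hdj : d j = 0 := le_antisymm (not_lt.1 hj') (hd0 j)
          rw [hcross i j h hdj]; simp
        have hcj : ∀ j : {i // P i}, c j.1 = cS j := by
          intro j
          rw [hc]
          simp only [dif_pos j.2, Subtype.coe_eta]
        have hsS : ∑ j ∈ univ.filter P, β i j * c j ^ p
            = ∑ j : {i // P i}, β i j.1 * cS j ^ p := by
          rw [Finset.sum_subtype (p := P) (univ.filter P) (fun x => by simp) (fun j => β i j * c j ^ p)]
          exact Finset.sum_congr rfl fun j _ => by rw [hcj j]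
        rw [hz, hsS, add_zero]
        exact hcSeq ⟨i, h⟩
      · have hci : c i = cZ ⟨i, h⟩ := by rw [hc]; simp only [h, dif_neg, not_false_iff]
        have hdi : d i = 0 := le_antisymm (not_lt.1 h) (hd0 i)
        rw [hci, hsplitsum]
        have hz : ∑ j ∈ univ.filter P, β i j * c j ^ p = 0 := by
          apply Finset.sum_eq_zero
          intro j hj
          have hj' : P j := (Finset.mem_filter.1 hj).2
          have hbij : β i j = 0 := by
            rw [hsym i j]; exact hcross j i hj' hdi
          rw [hbij]; simp
        have hcj : ∀ j : {i // ¬ P i}, c j.1 = cZ j := by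
          intro j
          rw [hc]
          simp only [dif_neg j.2, Subtype.coe_eta]
        have hsZ : ∑ j ∈ univ.filter (fun j => ¬ P j), β i j * c j ^ p
            = ∑ j : {i // ¬ P i}, β i j.1 * cZ j ^ p := by
          rw [Finset.sum_subtype (p := fun i => ¬ P i) (univ.filter (fun j => ¬ P j)) (fun x => by simp) (fun j => β i j * c j ^ p)]
          exact Finset.sum_congr rfl fun j _ => by rw [hcj j]
        rw [hz, hsZ, zero_add]
        exact hcZeq ⟨i, h⟩

/-- For `1 < p < 2` and a purely cooperative symmetric matrix `(β_{ij})`, the algebraic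
system `c_i = ∑_j β_{ij}|c_j|^p |c_i|^{p-2} c_i` has a solution with all components
positive (in particular, all nonzero). -/
theorem stmt3 (l : ℕ) (hl : 1 ≤ l) (p : ℝ) (hp1 : 1 < p) (hp2 : p < 2)
    (β : Fin l → Fin l → ℝ)
    (hsym : ∀ i j, β i j = β j i)
    (hdiag : ∀ i, 0 < β i i)
    (hoff : ∀ i j, i ≠ j → 0 ≤ β i j) :
    ∃ c : Fin l → ℝ, (∀ i, 0 < c i) ∧
      ∀ i, c i = ∑ j, β i j * |c j| ^ p * |c i| ^ (p - 2) * c i := by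
  obtain ⟨c, hc0, hceq⟩ := auxmain p hp1 hp2 l (Fin l) inferInstance inferInstance
    (by simp) β hsym hdiag hoff
  refine ⟨c, hc0, fun i => ?_⟩
  have habs : ∀ k : Fin l, |c k| = c k := fun k => abs_of_pos (hc0 k)
  have h1 : ∑ j, β i j * |c j| ^ p * |c i| ^ (p - 2) * c i
      = (∑ j, β i j * c j ^ p) * (c i ^ (p - 2) * c i) := by
    rw [Finset.sum_mul]
    apply Finset.sum_congr rfl
    intro j _
    rw [habs j, habs i]
    ring
  rw [h1, ← hceq i]
  have h2 : c i ^ (2 - p) * c i ^ (p - 2) = 1 := by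
    rw [← Real.rpow_add (hc0 i), show (2 - p) + (p - 2) = (0:ℝ) by ring, Real.rpow_zero]
  rw [← mul_assoc, h2, one_mul]
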